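/- Let a > 0, C > 0, h > 0, and let a₁, a₂, a₃, T be real numbers with a₁+T ≥ a, a₂+T ≥ a, a₃+T ≥ a, and with |a₁−a₂| ≤ Ch and |a₁−a₃| ≤ Ch. Then the arithmetic mean M₃(a₁,a₂,a₃) = (a₁+a₂+a₃)/3 and the translated harmonic mean J = H₃(a₁+T, a₂+T, a₃+T) − T satisfy |M₃(a₁,a₂,a₃) − J| ≤ (2C²/a)·h². -/

import Mathlib

/-- Harmonic mean of three reals. -/
noncomputable def H3 (a₁ a₂ a₃ : ℝ) : ℝ :=
  3 * a₁ * a₂ * a₃ / (a₂ * a₃ + a₁ * a₃ + a₁ * a₂)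

/-- Arithmetic mean of three reals. -/
noncomputable def M3 (a₁ a₂ a₃ : ℝ) : ℝ := (a₁ + a₂ + a₃) / 3

set_option maxHeartbeats 1000000 in
/-- The translated harmonic mean `J = H₃(a₁+T,a₂+T,a₃+T) − T` is within `O(h²)` of the
arithmetic mean `M₃(a₁,a₂,a₃)` when the translated values are bounded away from zero and
the pairwise differences are `O(h)`. -/
theorem translated_harmonic_close_to_arith (a C h : ℝ) (ha : 0 < a) (hC : 0 < C) (hh : 0 < h)
    (a₁ a₂ a₃ T : ℝ) (h₁ : a ≤ a₁ + T) (h₂ : a ≤ a₂ + T) (h₃ : a ≤ a₃ + T)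
    (h₁₂ : |a₁ - a₂| ≤ C * h) (h₁₃ : |a₁ - a₃| ≤ C * h) :
    |M3 a₁ a₂ a₃ - (H3 (a₁ + T) (a₂ + T) (a₃ + T) - T)| ≤ 2 * C ^ 2 / a * h ^ 2 := by
  set b₁ := a₁ + T with hb1
  set b₂ := a₂ + T with hb2
  set b₃ := a₃ + T with hb3
  have hb₁ : 0 < b₁ := lt_of_lt_of_le ha h₁
  have hb₂ : 0 < b₂ := lt_of_lt_of_le ha h₂
  have hb₃ : 0 < b₃ := lt_of_lt_of_le ha h₃
  have hS : 0 < b₂ * b₃ + b₁ * b₃ + b₁ * b₂ := by positivity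
  have key : M3 a₁ a₂ a₃ - (H3 b₁ b₂ b₃ - T)
      = (b₃ * (b₁ - b₂) ^ 2 + b₂ * (b₁ - b₃) ^ 2 + b₁ * (b₂ - b₃) ^ 2)
        / (3 * (b₂ * b₃ + b₁ * b₃ + b₁ * b₂)) := by
    unfold M3 H3
    rw [div_sub' hS.ne', div_sub_div _ _ (by norm_num) hS.ne', div_eq_div_iff (by positivity) (by positivity)]
    rw [hb1, hb2, hb3]
    ring
  have hnum : 0 ≤ b₃ * (b₁ - b₂) ^ 2 + b₂ * (b₁ - b₃) ^ 2 + b₁ * (b₂ - b₃) ^ 2 := by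
    positivity
  rw [key, abs_of_nonneg (by positivity), div_le_iff₀ (by positivity)]
  have e12 : (a₁ - a₂) ^ 2 ≤ (C * h) ^ 2 := by
    have := abs_nonneg (a₁ - a₂)
    nlinarith [sq_abs (a₁ - a₂)]
  have e13 : (a₁ - a₃) ^ 2 ≤ (C * h) ^ 2 := by
    have := abs_nonneg (a₁ - a₃)
    nlinarith [sq_abs (a₁ - a₃)]
  have h23 : |a₂ - a₃| ≤ 2 * (C * h) := by
    calc |a₂ - a₃| = |(a₂ - a₁) + (a₁ - a₃)| := by ring_nf
    _ ≤ |a₂ - a₁| + |a₁ - a₃| := abs_add_le _ _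
    _ ≤ C * h + C * h := by rw [abs_sub_comm]; linarith
    _ = 2 * (C * h) := by ring
  have e23 : (a₂ - a₃) ^ 2 ≤ 4 * (C * h) ^ 2 := by
    have := abs_nonneg (a₂ - a₃)
    nlinarith [sq_abs (a₂ - a₃)]
  have hd12 : b₁ - b₂ = a₁ - a₂ := by rw [hb1, hb2]; ring
  have hd13 : b₁ - b₃ = a₁ - a₃ := by rw [hb1, hb3]; ring
  have hd23 : b₂ - b₃ = a₂ - a₃ := by rw [hb2, hb3]; ring
  rw [hd12, hd13, hd23]
  rw [div_mul_eq_mul_div, div_mul_eq_mul_div, le_div_iff₀ ha]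
  have A : b₃ * (a * (a₁ - a₂) ^ 2) ≤ b₃ * (b₂ * (C * h) ^ 2) :=
    mul_le_mul_of_nonneg_left (mul_le_mul h₂ e12 (sq_nonneg _) hb₂.le) hb₃.le
  have B : b₂ * (a * (a₁ - a₃) ^ 2) ≤ b₂ * (b₃ * (C * h) ^ 2) :=
    mul_le_mul_of_nonneg_left (mul_le_mul h₃ e13 (sq_nonneg _) hb₃.le) hb₂.le
  have Cc : b₁ * (a * (a₂ - a₃) ^ 2) ≤ b₁ * (b₂ * (4 * (C * h) ^ 2)) :=
    mul_le_mul_of_nonneg_left (mul_le_mul h₂ e23 (sq_nonneg _) hb₂.le) hb₁.le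
  nlinarith [A, B, Cc, mul_nonneg (sq_nonneg (C * h)) (mul_pos hb₂ hb₃).le,
    mul_nonneg (sq_nonneg (C * h)) (mul_pos hb₁ hb₃).le,
    mul_nonneg (sq_nonneg (C * h)) (mul_pos hb₁ hb₂).le]
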